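/- Let L be a fuzzy lax extension of a Set-functor T, and let α : A → TA be a coalgebra. The L-behavioural distance d^L_α, defined as the pointwise infimum of all L-simulations R : A ×> A on (A,α), is a hemimetric on A. If moreover L preserves converse, then d^L_α is a pseudometric. -/

import Mathlib

open unitInterval

noncomputable section

instance : Fact ((0:ℝ) ≤ 1) := ⟨zero_le_one⟩

/-- A fuzzy relation between `A` and `B` is a map `A × B → [0,1]`. -/
abbrev FRel (A B : Type) : Type := A → B → I

/-- Clamp a real number into the unit interval. -/
def clamp (x : ℝ) : I := Set.projIcc 0 1 zero_le_one x

/-- Composition of fuzzy relations: `(R;S)(a,c) = inf_b min(R(a,b) + S(b,c), 1)`. -/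
def fcomp {A B C : Type} (R : FRel A B) (S : FRel B C) : FRel A C :=
  fun a c => ⨅ b : B, clamp ((R a b : ℝ) + (S b c : ℝ))

/-- Converse of a fuzzy relation. -/
def fconv {A B : Type} (R : FRel A B) : FRel B A := fun b a => R a b

open scoped Classical in
/-- The `ε`-graph of a function. -/
def fgraphE {A B : Type} (ε : I) (f : A → B) : FRel A B :=
  fun a b => if f a = b then ε else 1

/-- The graph of a function. -/
def fgraph {A B : Type} (f : A → B) : FRel A B := fgraphE 0 f

/-- The `ε`-diagonal. -/
def fdiagE (ε : I) (A : Type) : FRel A A := fgraphE ε (id : A → A)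

/-- The diagonal. -/
def fdiag (A : Type) : FRel A A := fgraph (id : A → A)

/-- A Set-functor. -/
structure SetFunctor where
  obj : Type → Type
  map : {A B : Type} → (A → B) → obj A → obj B
  map_id : ∀ (A : Type), map (id : A → A) = id
  map_comp : ∀ {A B C : Type} (f : A → B) (g : B → C), map (g ∘ f) = map g ∘ map f

/-- A fuzzy lax extension of a Set-functor. -/
structure LaxExt (T : SetFunctor) where
  lift : {A B : Type} → FRel A B → FRel (T.obj A) (T.obj B)
  mono : ∀ {A B : Type} (R S : FRel A B), R ≤ S → lift R ≤ lift S
  lax_comp : ∀ {A B C : Type} (R : FRel A B) (S : FRel B C),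
    lift (fcomp R S) ≤ fcomp (lift R) (lift S)
  lax_graph : ∀ {A B : Type} (f : A → B), lift (fgraph f) ≤ fgraph (T.map f)
  lax_graph_conv : ∀ {A B : Type} (f : A → B),
    lift (fconv (fgraph f)) ≤ fconv (fgraph (T.map f))

end

/-- `d` is a hemimetric: reflexivity and the triangle inequality. -/
def IsHemimetric {X : Type} (d : FRel X X) : Prop :=
  (∀ x, d x x = 0) ∧ ∀ x y z, (d x z : ℝ) ≤ (d x y : ℝ) + (d y z : ℝ)

/-- `d` is a pseudometric: a symmetric hemimetric. -/
def IsPseudometric {X : Type} (d : FRel X X) : Prop :=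
  IsHemimetric d ∧ ∀ x y, d x y = d y x

/-- `L` preserves converse. -/
def PreservesConv (T : SetFunctor) (L : LaxExt T) : Prop :=
  ∀ (A B : Type) (R : FRel A B), L.lift (fconv R) = fconv (L.lift R)

/-- `R` is an `L`-simulation between coalgebras `α` and `β`. -/
def IsSim (T : SetFunctor) (L : LaxExt T) {A B : Type}
    (α : A → T.obj A) (β : B → T.obj B) (R : FRel A B) : Prop :=
  ∀ a b, L.lift R (α a) (β b) ≤ R a b

/-- `L`-behavioural distance: the pointwise infimum of all `L`-simulations. -/
noncomputable def behDist (T : SetFunctor) (L : LaxExt T) {A B : Type}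
    (α : A → T.obj A) (β : B → T.obj B) : FRel A B :=
  fun a b => ⨅ R : {R : FRel A B // IsSim T L α β R}, R.1 a b

section Aux

lemma I_le_iff {x y : I} : x ≤ y ↔ (x : ℝ) ≤ (y : ℝ) := Iff.rfl

lemma clamp_mono : Monotone clamp := fun _ _ h => Set.monotone_projIcc zero_le_one h

lemma clamp_coe_le {x : ℝ} (h : 0 ≤ x) : (clamp x : ℝ) ≤ x := by
  show max 0 (min 1 x) ≤ x
  exact max_le h (min_le_right _ _)

/-- `behDist` is itself an `L`-simulation. -/
lemma behDist_isSim (T : SetFunctor) (L : LaxExt T) {A B : Type}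
    (α : A → T.obj A) (β : B → T.obj B) : IsSim T L α β (behDist T L α β) := by
  intro a b
  refine le_iInf fun R => ?_
  calc L.lift (behDist T L α β) (α a) (β b)
      ≤ L.lift R.1 (α a) (β b) := by
        refine L.mono _ _ (fun a' b' => ?_) _ _
        exact iInf_le (fun S : {S : FRel A B // IsSim T L α β S} => S.1 a' b') R
    _ ≤ R.1 a b := R.2 a b

lemma fdiag_isSim (T : SetFunctor) (L : LaxExt T) {A : Type}
    (α : A → T.obj A) : IsSim T L α α (fdiag A) := by
  intro a b
  by_cases hab : a = b
  · subst hab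
    have h1 : L.lift (fdiag A) (α a) (α a) ≤ fgraph (T.map (id : A → A)) (α a) (α a) :=
      L.lax_graph id _ _
    have h2 : fgraph (T.map (id : A → A)) (α a) (α a) = 0 := by
      simp [fgraph, fgraphE, T.map_id]
    have h3 : fdiag A a a = 0 := by simp [fdiag, fgraph, fgraphE]
    rw [h3]; rw [h2] at h1; exact h1
  · have h3 : fdiag A a b = 1 := by simp [fdiag, fgraph, fgraphE, hab]
    rw [h3, I_le_iff]
    exact (L.lift (fdiag A) (α a) (α b)).2.2

lemma comp_isSim (T : SetFunctor) (L : LaxExt T) {A B C : Type}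
    (α : A → T.obj A) (β : B → T.obj B) (γ : C → T.obj C)
    {R : FRel A B} {S : FRel B C} (hR : IsSim T L α β R) (hS : IsSim T L β γ S) :
    IsSim T L α γ (fcomp R S) := by
  intro a c
  refine le_trans (L.lax_comp R S _ _) (le_iInf fun b => ?_)
  calc fcomp (L.lift R) (L.lift S) (α a) (γ c)
      ≤ clamp ((L.lift R (α a) (β b) : ℝ) + (L.lift S (β b) (γ c) : ℝ)) :=
        iInf_le _ (β b)
    _ ≤ clamp ((R a b : ℝ) + (S b c : ℝ)) :=
        clamp_mono (add_le_add (hR a b) (hS b c))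

lemma conv_isSim (T : SetFunctor) (L : LaxExt T) {A B : Type}
    (α : A → T.obj A) (β : B → T.obj B) (hP : PreservesConv T L)
    {R : FRel A B} (hR : IsSim T L α β R) : IsSim T L β α (fconv R) := by
  intro b a
  have := hR a b
  rw [hP A B R]
  exact this

end Aux

/-- `L`-behavioural distance is a hemimetric; it is a pseudometric if `L`
preserves converse. -/
theorem behavioural_distance_hemimetric (T : SetFunctor) (L : LaxExt T)
    (A : Type) (α : A → T.obj A) :
    IsHemimetric (behDist T L α α) ∧
    (PreservesConv T L → IsPseudometric (behDist T L α α)) := by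
  set d := behDist T L α α with hd
  have hdsim : IsSim T L α α d := behDist_isSim T L α α
  have hrefl : ∀ x, d x x = 0 := by
    intro x
    refine le_antisymm ?_ (by rw [I_le_iff]; exact (d x x).2.1)
    have h := iInf_le (fun R : {R : FRel A A // IsSim T L α α R} => R.1 x x)
      ⟨fdiag A, fdiag_isSim T L α⟩
    exact le_trans h (le_of_eq (by simp [fdiag, fgraph, fgraphE]))
  have htri : ∀ x y z, (d x z : ℝ) ≤ (d x y : ℝ) + (d y z : ℝ) := by
    intro x y z
    have hcomp : IsSim T L α α (fcomp d d) := comp_isSim T L α α α hdsim hdsim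
    have h1 : d x z ≤ fcomp d d x z :=
      iInf_le (fun R : {R : FRel A A // IsSim T L α α R} => R.1 x z) ⟨fcomp d d, hcomp⟩
    have h2 : fcomp d d x z ≤ clamp ((d x y : ℝ) + (d y z : ℝ)) := iInf_le _ y
    have h3 : (clamp ((d x y : ℝ) + (d y z : ℝ)) : ℝ) ≤ (d x y : ℝ) + (d y z : ℝ) :=
      clamp_coe_le (add_nonneg (d x y).2.1 (d y z).2.1)
    exact le_trans (le_trans h1 h2) h3
  refine ⟨⟨hrefl, htri⟩, fun hP => ⟨⟨hrefl, htri⟩, fun x y => ?_⟩⟩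
  have key : ∀ u v : A, d u v ≤ d v u := by
    intro u v
    have hconv : IsSim T L α α (fconv d) := conv_isSim T L α α hP hdsim
    exact iInf_le (fun R : {R : FRel A A // IsSim T L α α R} => R.1 u v) ⟨fconv d, hconv⟩
  exact le_antisymm (key x y) (key y x)
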